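/- (Energy estimate) Let D ⊆ E with d_D finite. For every finite nonempty connected set I ⊆ V, the excess energy of the configuration σ_I obtained from σ^{D+} by flipping all spins on I satisfies H(σ_I) - H(σ^{D+}) ≥ 2J[(k+1) - 2(d_D + 1)] · |I|. -/

import Mathlib

open Classical

/-- `G` is a Cayley tree with branching number `k`: an infinite connected acyclic
simple graph in which every vertex has exactly `k + 1` neighbors. -/
structure IsCayleyTree {V : Type*} (G : SimpleGraph V) (k : ℕ) : Prop where
  infinite : Infinite V
  connected : G.Connected
  acyclic : G.IsAcyclic
  degree : ∀ v : V, (G.neighborSet v).ncard = k + 1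

/-- A spin configuration takes values in `{-1, +1}`. -/
def IsSpin {V : Type*} (σ : V → ℤ) : Prop := ∀ v, σ v = 1 ∨ σ v = -1

/-- `σ` is frustrated exactly on the edges of `D`: for every edge `{x,y}` of `G`,
`σ x * σ y = -1` if `{x,y} ∈ D` and `σ x * σ y = 1` otherwise. -/
def SatisfiesD {V : Type*} (G : SimpleGraph V) (D : Set (Sym2 V)) (σ : V → ℤ) : Prop :=
  ∀ x y : V, G.Adj x y →
    (s(x, y) ∈ D → σ x * σ y = -1) ∧ (s(x, y) ∉ D → σ x * σ y = 1)

/-- The excess energy `H(σ) - H(σbase) = J * Σ_{{x,y} ∈ E} (σbase x * σbase y - σ x * σ y)`,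
a sum with finitely many nonzero terms when `σ` and `σbase` differ at finitely many sites. -/
noncomputable def excessEnergy {V : Type*} (G : SimpleGraph V) (J : ℝ) (σ σbase : V → ℤ) : ℝ :=
  J * ∑ᶠ e ∈ G.edgeSet,
      ((Sym2.lift ⟨fun x y => σbase x * σbase y - σ x * σ y, fun _ _ => by ring⟩ e : ℤ) : ℝ)

/-- The configuration obtained from `σ` by flipping all spins in `C`. -/
noncomputable def flipSpins {V : Type*} (σ : V → ℤ) (C : Set V) : V → ℤ :=
  fun v => if v ∈ C then -σ v else σ v

/-- The number `d_D(v)` of edges of `D` incident to the vertex `v`. -/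
noncomputable def incidentCount {V : Type*} (D : Set (Sym2 V)) (v : V) : ℕ :=
  {e ∈ D | v ∈ e}.ncard

/-- A set of vertices is connected if any two of its vertices are joined by a
walk staying within the set. -/
def SetConnected {V : Type*} (G : SimpleGraph V) (S : Set V) : Prop :=
  ∀ x ∈ S, ∀ y ∈ S, ∃ p : G.Walk x y, ∀ z ∈ p.support, z ∈ S

section Aux

variable {V : Type*} {G : SimpleGraph V}

lemma neighborSet_finite_of_ncard {v : V} {k : ℕ}
    (h : (G.neighborSet v).ncard = k + 1) : (G.neighborSet v).Finite := by
  rcases Set.finite_or_infinite (G.neighborSet v) with hf | hf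
  · exact hf
  · rw [hf.ncard] at h; omega

lemma incidenceSet_finite {v : V} (h : (G.neighborSet v).Finite) :
    (G.incidenceSet v).Finite := by
  have : Finite (G.neighborSet v) := h
  exact Set.finite_coe_iff.mp (Finite.of_equiv _ (G.incidenceSetEquivNeighborSet v).symm)

lemma reachable_induce {I : Set V} :
    ∀ {x y : V} (p : G.Walk x y), (∀ z ∈ p.support, z ∈ I) →
      ∀ (hx : x ∈ I) (hy : y ∈ I), (G.induce I).Reachable ⟨x, hx⟩ ⟨y, hy⟩ := by
  intro x y p
  induction p with
  | nil => intro _ _ _; exact SimpleGraph.Reachable.refl _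
  | @cons u v w h q ih =>
    intro hsupp hx hy
    have hv : v ∈ I := hsupp v (by simp)
    have hadj : (G.induce I).Adj ⟨u, hx⟩ ⟨v, hv⟩ := by simpa using h
    exact hadj.reachable.trans (ih (fun z hz => hsupp z (by simp [hz])) hv hy)

lemma interior_ncard (hac : G.IsAcyclic) {I : Set V} (hIfin : I.Finite)
    (hIne : I.Nonempty) (hconn : SetConnected G I) :
    {e ∈ G.edgeSet | ∀ x ∈ e, x ∈ I}.ncard + 1 = I.ncard := by
  classical
  haveI : Fintype I := hIfin.fintype
  set G' := G.induce I with hG'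
  have hac' : G'.IsAcyclic := by
    intro v c hc
    exact hac _ (hc.map (f := (SimpleGraph.Embedding.induce I).toHom) Subtype.val_injective)
  have hconn' : G'.Connected := by
    haveI : Nonempty I := ⟨⟨hIne.choose, hIne.choose_spec⟩⟩
    refine ⟨?_⟩
    rintro ⟨a, ha⟩ ⟨b, hb⟩
    obtain ⟨p, hp⟩ := hconn a ha b hb
    exact reachable_induce p hp ha hb
  haveI : Fintype G'.edgeSet := Fintype.ofFinite _
  have htree : G'.IsTree := ⟨hconn', hac'⟩
  have hcard := htree.card_edgeFinset
  have himg : Sym2.map (Subtype.val : I → V) '' G'.edgeSet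
      = {e ∈ G.edgeSet | ∀ x ∈ e, x ∈ I} := by
    ext e
    constructor
    · rintro ⟨e', he', rfl⟩
      induction e' using Sym2.ind with
      | _ a b =>
        refine ⟨by simpa [hG'] using he', ?_⟩
        intro x hx
        rcases Sym2.mem_iff.mp (by simpa using hx) with h | h
        · exact h ▸ a.2
        · exact h ▸ b.2
    · rintro ⟨he, hall⟩
      induction e using Sym2.ind with
      | _ x y =>
        have hx : x ∈ I := hall x (Sym2.mem_mk_left x y)
        have hy : y ∈ I := hall y (Sym2.mem_mk_right x y)
        exact ⟨s(⟨x, hx⟩, ⟨y, hy⟩), by simpa [hG'] using he, by simp⟩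
  have hinj := Set.ncard_image_of_injective G'.edgeSet
    (Sym2.map.injective (Subtype.val_injective (p := (· ∈ I))))
  rw [← himg, hinj]
  have h1 : G'.edgeSet.ncard = G'.edgeFinset.card := by
    rw [Set.ncard_eq_toFinset_card']
    congr 1
  have h2 : I.ncard = Fintype.card I := by
    rw [Set.ncard_eq_toFinset_card', Set.toFinset_card]
  rw [h1, h2, hcard]

end Aux

/-- Energy estimate: For every finite nonempty connected set `I`,
`H(σ_I) - H(σ^{D+}) ≥ 2J[(k+1) - 2(d_D + 1)]·|I|`. -/
theorem energy_estimate_connected {V : Type*} (G : SimpleGraph V) (k : ℕ) (hk : 2 ≤ k)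
    (hG : IsCayleyTree G k) (root : V) (J : ℝ) (hJ : 0 < J)
    (D : Set (Sym2 V)) (hD : D ⊆ G.edgeSet)
    (dD : ℕ) (hbdd : BddAbove (Set.range fun v => incidentCount D v))
    (hdD : dD = ⨆ v, incidentCount D v)
    (σ : V → ℤ) (hσ : IsSpin σ) (hσroot : σ root = 1) (hσD : SatisfiesD G D σ)
    (I : Set V) (hIfin : I.Finite) (hIne : I.Nonempty) (hIconn : SetConnected G I) :
    excessEnergy G J (flipSpins σ I) σ
      ≥ 2 * J * (((k : ℝ) + 1) - 2 * ((dD : ℝ) + 1)) * (I.ncard : ℝ) := by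
  classical
  have hnb : ∀ v : V, (G.neighborSet v).Finite :=
    fun v => neighborSet_finite_of_ncard (hG.degree v)
  have hinc : ∀ v : V, (G.incidenceSet v).Finite := fun v => incidenceSet_finite (hnb v)
  set σ' : V → ℤ := flipSpins σ I with hσ'def
  have hflip_in : ∀ x ∈ I, σ' x = -σ x := fun x hx => by simp [hσ'def, flipSpins, hx]
  have hflip_out : ∀ x, x ∉ I → σ' x = σ x := fun x hx => by simp [hσ'def, flipSpins, hx]
  set I' : Finset V := hIfin.toFinset with hI'def
  have hmemI' : ∀ v, v ∈ I' ↔ v ∈ I := fun v => hIfin.mem_toFinset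
  set n := I'.card with hndef
  have hncard : I.ncard = n := Set.ncard_eq_toFinset_card I hIfin
  have hn1 : 1 ≤ n :=
    Finset.card_pos.mpr ⟨hIne.choose, (hmemI' _).mpr hIne.choose_spec⟩
  set EI : Finset (Sym2 V) := I'.biUnion (fun v => (hinc v).toFinset) with hEIdef
  have hmemEI : ∀ e, e ∈ EI ↔ (e ∈ G.edgeSet ∧ ∃ v ∈ I, v ∈ e) := by
    intro e
    simp only [hEIdef, Finset.mem_biUnion, Set.Finite.mem_toFinset, hmemI',
      SimpleGraph.incidenceSet, Set.mem_sep_iff]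
    constructor
    · rintro ⟨v, hv, he, hve⟩; exact ⟨he, v, hv, hve⟩
    · rintro ⟨he, v, hv, hve⟩; exact ⟨v, hv, he, hve⟩
  set p : Sym2 V → Prop := fun e => ∀ x ∈ e, x ∈ I with hpdef
  set Int : Finset (Sym2 V) := EI.filter p with hIntdef
  set Bnd : Finset (Sym2 V) := EI.filter (fun e => ¬ p e) with hBnddef
  have hBndmem : ∀ x y : V,
      s(x, y) ∈ Bnd ↔ G.Adj x y ∧ ((x ∈ I ∧ y ∉ I) ∨ (y ∈ I ∧ x ∉ I)) := by
    intro x y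
    rw [hBnddef, Finset.mem_filter, hmemEI, SimpleGraph.mem_edgeSet]
    constructor
    · rintro ⟨⟨hadj, hv⟩, hnp⟩
      refine ⟨hadj, ?_⟩
      by_cases hx : x ∈ I <;> by_cases hy : y ∈ I
      · exact absurd (fun z hz => by
          rcases Sym2.mem_iff.mp hz with rfl | rfl <;> assumption) hnp
      · exact Or.inl ⟨hx, hy⟩
      · exact Or.inr ⟨hy, hx⟩
      · obtain ⟨v, hvI, hve⟩ := hv
        rcases Sym2.mem_iff.mp hve with rfl | rfl <;> contradiction
    · rintro ⟨hadj, ⟨hx, hy⟩ | ⟨hy, hx⟩⟩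
      · exact ⟨⟨hadj, ⟨x, hx, Sym2.mem_mk_left x y⟩⟩,
          fun h => hy (h y (Sym2.mem_mk_right x y))⟩
      · exact ⟨⟨hadj, ⟨y, hy, Sym2.mem_mk_right x y⟩⟩,
          fun h => hx (h x (Sym2.mem_mk_left x y))⟩
  have hBndE : ∀ e ∈ Bnd, e ∈ G.edgeSet := by
    intro e he
    exact ((hmemEI e).mp (Finset.mem_of_mem_filter e he)).1
  set F : Sym2 V → ℝ := fun e =>
    ((Sym2.lift ⟨fun x y => σ x * σ y - σ' x * σ' y, fun _ _ => by ring⟩ e : ℤ) : ℝ)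
    with hFdef
  have hF : ∀ x y : V, F s(x, y) = ((σ x * σ y - σ' x * σ' y : ℤ) : ℝ) := by
    intro x y; simp [hFdef]
  have hE : excessEnergy G J (flipSpins σ I) σ = J * ∑ e ∈ Bnd, F e := by
    rw [excessEnergy]
    congr 1
    refine finsum_mem_eq_sum_of_inter_support_eq F ?_
    ext e
    simp only [Set.mem_inter_iff, Function.mem_support, Finset.mem_coe]
    constructor
    · rintro ⟨he, hne⟩
      refine ⟨?_, hne⟩
      revert he hne
      induction e using Sym2.ind with
      | _ x y =>
        intro he hne
        have hadj : G.Adj x y := he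
        rw [hBndmem]
        refine ⟨hadj, ?_⟩
        by_cases hx : x ∈ I <;> by_cases hy : y ∈ I
        · exfalso; apply hne
          rw [hF, hflip_in x hx, hflip_in y hy]; push_cast; ring
        · exact Or.inl ⟨hx, hy⟩
        · exact Or.inr ⟨hy, hx⟩
        · exfalso; apply hne
          rw [hF, hflip_out x hx, hflip_out y hy]; push_cast; ring
    · rintro ⟨he, hne⟩
      exact ⟨hBndE e he, hne⟩
  have hFB : ∀ e ∈ Bnd, F e = (if e ∈ D then (-2 : ℝ) else 2) := by
    intro e
    induction e using Sym2.ind with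
    | _ x y =>
      intro he
      rw [hBndmem] at he
      obtain ⟨hadj, hcase⟩ := he
      have hσD' := hσD x y hadj
      have hval : σ x * σ y - σ' x * σ' y = 2 * (σ x * σ y) := by
        rcases hcase with ⟨hx, hy⟩ | ⟨hy, hx⟩
        · rw [hflip_in x hx, hflip_out y hy]; ring
        · rw [hflip_in y hy, hflip_out x hx]; ring
      rw [hF, hval]
      by_cases hd : s(x, y) ∈ D
      · rw [hσD'.1 hd]; norm_num [hd]
      · rw [hσD'.2 hd]; norm_num [hd]
  set b := Bnd.card with hbdef
  set m := (Bnd.filter (fun e => e ∈ D)).card with hmdef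
  have hsumB : ∑ e ∈ Bnd, F e = 2 * (b : ℝ) - 4 * (m : ℝ) := by
    rw [Finset.sum_congr rfl hFB, Finset.sum_ite, Finset.sum_const, Finset.sum_const]
    have hsplit := Finset.card_filter_add_card_filter_not
      (s := Bnd) (p := fun e => e ∈ D)
    rw [← hbdef] at hsplit
    rw [← hmdef]
    have : ((Bnd.filter (fun e => ¬ e ∈ D)).card : ℝ) = (b : ℝ) - (m : ℝ) := by
      have : m + (Bnd.filter (fun e => ¬ e ∈ D)).card = b := by
        rw [hmdef]; exact hsplit
      push_cast [← this]; ring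
    rw [nsmul_eq_mul, nsmul_eq_mul, this]
    ring
  -- bound on m
  have hDfin : ∀ v : V, ({e ∈ D | v ∈ e} : Set (Sym2 V)).Finite := fun v =>
    (hinc v).subset (fun e he => ⟨hD he.1, he.2⟩)
  have hicd : ∀ v, incidentCount D v ≤ dD := by
    intro v; rw [hdD]; exact le_ciSup hbdd v
  have hm : m ≤ n * dD := by
    have hsub : Bnd.filter (fun e => e ∈ D) ⊆ I'.biUnion (fun v => (hDfin v).toFinset) := by
      intro e he
      rw [Finset.mem_filter] at he
      obtain ⟨heB, heD⟩ := he
      obtain ⟨_, v, hvI, hve⟩ := (hmemEI e).mp (Finset.mem_of_mem_filter e heB)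
      exact Finset.mem_biUnion.mpr
        ⟨v, (hmemI' v).mpr hvI, (hDfin v).mem_toFinset.mpr ⟨heD, hve⟩⟩
    calc m ≤ (I'.biUnion (fun v => (hDfin v).toFinset)).card := Finset.card_le_card hsub
      _ ≤ ∑ v ∈ I', (hDfin v).toFinset.card := Finset.card_biUnion_le
      _ ≤ ∑ _v ∈ I', dD := Finset.sum_le_sum (fun v _ => by
          rw [← Set.ncard_eq_toFinset_card _ (hDfin v)]; exact hicd v)
      _ = n * dD := by rw [Finset.sum_const, smul_eq_mul]
  -- degree count
  have hdeg : ∀ v : V, (hinc v).toFinset.card = k + 1 := by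
    intro v
    rw [← Set.ncard_eq_toFinset_card _ (hinc v), ← Nat.card_coe_set_eq,
      Nat.card_congr (G.incidenceSetEquivNeighborSet v), Nat.card_coe_set_eq,
      hG.degree v]
  have hsub' : ∀ v ∈ I', (hinc v).toFinset = EI.filter (fun e => v ∈ e) := by
    intro v hv
    ext e
    simp only [Set.Finite.mem_toFinset, Finset.mem_filter, hmemEI,
      SimpleGraph.incidenceSet, Set.mem_sep_iff]
    constructor
    · intro he; exact ⟨⟨he.1, v, (hmemI' v).mp hv, he.2⟩, he.2⟩
    · rintro ⟨⟨he, _⟩, hve⟩; exact ⟨he, hve⟩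
  have hInt2 : ∀ e ∈ Int, (I'.filter (fun v => v ∈ e)).card = 2 := by
    intro e
    induction e using Sym2.ind with
    | _ x y =>
      intro he
      rw [hIntdef, Finset.mem_filter, hmemEI] at he
      obtain ⟨⟨he1, _⟩, hp⟩ := he
      have hadj : G.Adj x y := he1
      have hx : x ∈ I := hp x (Sym2.mem_mk_left x y)
      have hy : y ∈ I := hp y (Sym2.mem_mk_right x y)
      have : I'.filter (fun v => v ∈ s(x, y)) = {x, y} := by
        ext v
        simp only [Finset.mem_filter, hmemI', Sym2.mem_iff, Finset.mem_insert,
          Finset.mem_singleton]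
        constructor
        · rintro ⟨_, rfl | rfl⟩ <;> simp
        · rintro (rfl | rfl) <;> simp [hx, hy]
      rw [this, Finset.card_pair hadj.ne]
  have hBnd1 : ∀ e ∈ Bnd, (I'.filter (fun v => v ∈ e)).card = 1 := by
    intro e
    induction e using Sym2.ind with
    | _ x y =>
      intro he
      rw [hBndmem] at he
      obtain ⟨hadj, hcase⟩ := he
      rcases hcase with ⟨hx, hy⟩ | ⟨hy, hx⟩
      · have : I'.filter (fun v => v ∈ s(x, y)) = {x} := by
          ext v
          simp only [Finset.mem_filter, hmemI', Sym2.mem_iff, Finset.mem_singleton]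
          constructor
          · rintro ⟨hvI, rfl | rfl⟩
            · rfl
            · exact absurd hvI hy
          · rintro rfl; simp [hx]
        rw [this, Finset.card_singleton]
      · have : I'.filter (fun v => v ∈ s(x, y)) = {y} := by
          ext v
          simp only [Finset.mem_filter, hmemI', Sym2.mem_iff, Finset.mem_singleton]
          constructor
          · rintro ⟨hvI, rfl | rfl⟩
            · exact absurd hvI hx
            · rfl
          · rintro rfl; simp [hy]
        rw [this, Finset.card_singleton]
  have hcount : (k + 1) * n = 2 * Int.card + b := by
    have h1 : (k + 1) * n = ∑ v ∈ I', (EI.filter (fun e => v ∈ e)).card := by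
      calc (k + 1) * n = ∑ _v ∈ I', (k + 1) := by
            rw [Finset.sum_const, smul_eq_mul, mul_comm]
        _ = ∑ v ∈ I', (EI.filter (fun e => v ∈ e)).card :=
            Finset.sum_congr rfl (fun v hv => by rw [← hsub' v hv, hdeg v])
    have h2 : ∑ v ∈ I', (EI.filter (fun e => v ∈ e)).card
        = ∑ e ∈ EI, (I'.filter (fun v => v ∈ e)).card := by
      simp_rw [Finset.card_filter]
      exact Finset.sum_comm
    have h3 : ∑ e ∈ EI, (I'.filter (fun v => v ∈ e)).card
        = (∑ _e ∈ Int, 2) + (∑ _e ∈ Bnd, 1) := by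
      rw [← Finset.sum_filter_add_sum_filter_not EI p]
      congr 1
      · exact Finset.sum_congr rfl hInt2
      · exact Finset.sum_congr rfl hBnd1
    rw [h1, h2, h3, Finset.sum_const, Finset.sum_const, smul_eq_mul, smul_eq_mul,
      mul_comm Int.card 2, mul_one]
  have hIntcard : Int.card + 1 = n := by
    have h := interior_ncard hG.acyclic hIfin hIne hIconn
    have hset : ({e ∈ G.edgeSet | ∀ x ∈ e, x ∈ I} : Set (Sym2 V)) = ↑Int := by
      ext e
      simp only [Set.mem_setOf_eq, Finset.coe_filter, hIntdef, hmemEI, hpdef]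
      constructor
      · rintro ⟨he, hall⟩
        have hex : ∃ v, v ∈ e := by
          revert hall
          induction e using Sym2.ind with
          | _ x y => exact fun _ => ⟨x, Sym2.mem_mk_left x y⟩
        obtain ⟨v0, hv0⟩ := hex
        exact ⟨⟨he, v0, hall v0 hv0, hv0⟩, hall⟩
      · rintro ⟨⟨he, _⟩, hall⟩; exact ⟨he, hall⟩
    rw [hset, Set.ncard_coe_finset, hncard] at h
    exact h
  -- final arithmetic
  rw [hE, hsumB, hncard]
  have hb : ((k : ℝ) + 1) * n = 2 * (Int.card : ℝ) + b := by exact_mod_cast hcount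
  have hi : (Int.card : ℝ) + 1 = n := by exact_mod_cast hIntcard
  have hm' : (m : ℝ) ≤ (n : ℝ) * dD := by exact_mod_cast hm
  have key : 2 * (b : ℝ) - 4 * m ≥ 2 * (((k : ℝ) + 1) - 2 * ((dD : ℝ) + 1)) * n := by
    nlinarith
  calc J * (2 * (b : ℝ) - 4 * m)
      ≥ J * (2 * (((k : ℝ) + 1) - 2 * ((dD : ℝ) + 1)) * n) :=
        mul_le_mul_of_nonneg_left key hJ.le
    _ = 2 * J * (((k : ℝ) + 1) - 2 * ((dD : ℝ) + 1)) * n := by ring
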